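/- arXiv:2304.11355 — 2 statements merged into one kernel-verified Lean document; each statement's English description precedes it below -/
import Mathlib

section
/- Let k be a field, R = k[[t]], K = k((t)), r ≥ 2, and let ψ ∈ M_r(R) be an r×r matrix over R such that: the (1,1) entry has t-adic valuation exactly 1, the (i,i) entries for i > 1 have valuation 0 (are units), and all off-diagonal entries have valuation at least 2. Let h = det(ψ), which has valuation exactly 1. Then the unique matrix g ∈ SL_r(K) satisfying ψ = g · diag(h, 1, …, 1) has all entries in R, i.e., g ∈ SL_r(R). -/
open PowerSeries

set_option synthInstance.maxHeartbeats 1000000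
set_option maxHeartbeats 1000000

-- order of a negation
lemma aux_order_neg {k : Type} [Field k] (f : PowerSeries k) :
    (-f).order = f.order := by
  have : (-f) = (-1 : PowerSeries k) * f := by ring
  rw [this, PowerSeries.order_mul, PowerSeries.order_zero_of_unit (IsUnit.of_mul_eq_one _ (by ring : (-1 : PowerSeries k) * (-1) = 1)), zero_add]

-- order of ℤˣ-smul
lemma aux_order_units_smul {k : Type} [Field k] (u : ℤˣ) (f : PowerSeries k) :
    (u • f).order = f.order := by
  rcases Int.units_eq_one_or u with h | h <;> subst h
  · simp
  · rw [show ((-1 : ℤˣ) • f) = -f by simp]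
    exact aux_order_neg f

-- order of a finset product
lemma aux_order_prod {k ι : Type} [Field k] (s : Finset ι) (f : ι → PowerSeries k) :
    (∏ i ∈ s, f i).order = ∑ i ∈ s, (f i).order := by
  classical
  induction s using Finset.induction with
  | empty => simp [PowerSeries.order_one]
  | insert a s' hx ih => simp [Finset.prod_insert hx, Finset.sum_insert hx,
      PowerSeries.order_mul, ih]

-- lower bound of order of a sum
lemma aux_le_order_sum {k ι : Type} [Field k] (s : Finset ι) (f : ι → PowerSeries k) (n : ℕ∞)
    (h : ∀ i ∈ s, n ≤ (f i).order) : n ≤ (∑ i ∈ s, f i).order := by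
  apply PowerSeries.le_order
  intro d hd
  rw [map_sum]
  exact Finset.sum_eq_zero fun i hi =>
    PowerSeries.coeff_of_lt_order d (lt_of_lt_of_le hd (h i hi))

-- divisibility from order
lemma aux_dvd_of_le_order {k : Type} [Field k] {a b : PowerSeries k} (ha : a ≠ 0)
    (h : a.order ≤ b.order) : a ∣ b := by
  have hfin : a.order < ⊤ := PowerSeries.order_finite_iff_ne_zero.mpr ha
  obtain ⟨u, hu⟩ := PowerSeries.isUnit_divided_by_X_pow_order ha
  have heq : a = PowerSeries.X ^ (a.order.lift hfin) * a.divXPowOrder := by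
    rw [ENat.lift_eq_toNat_of_lt_top]; exact PowerSeries.X_pow_order_mul_divXPowOrder.symm
  have hXdvd : (PowerSeries.X : PowerSeries k) ^ (a.order.lift hfin) ∣ b := by
    rw [PowerSeries.X_pow_dvd_iff]
    intro i hi
    apply PowerSeries.coeff_of_lt_order
    refine lt_of_lt_of_le ?_ h
    have : ((a.order.lift hfin : ℕ) : ℕ∞) = a.order := ENat.coe_lift _ _
    rw [← this]
    exact_mod_cast hi
  obtain ⟨c, hc⟩ := hXdvd
  refine ⟨↑u⁻¹ * c, ?_⟩
  calc b = PowerSeries.X ^ (a.order.lift hfin) * c := hc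
    _ = (PowerSeries.X ^ (a.order.lift hfin) * (↑u * ↑u⁻¹)) * c := by
        rw [Units.mul_inv, mul_one]
    _ = a * (↑u⁻¹ * c) := by rw [hu, ← mul_assoc]; (conv_rhs => rw [heq]); ring

lemma aux_order_det {k : Type} [Field k] {m : ℕ}
    (ψ : Matrix (Fin (m + 2)) (Fin (m + 2)) (PowerSeries k))
    (h11 : PowerSeries.order (ψ 0 0) = 1)
    (hdiag : ∀ i : Fin (m + 2), i ≠ 0 → IsUnit (ψ i i))
    (hoff : ∀ i j : Fin (m + 2), i ≠ j → 2 ≤ PowerSeries.order (ψ i j)) :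
    PowerSeries.order ψ.det = 1 := by
  classical
  rw [Matrix.det_apply]
  rw [← Finset.add_sum_erase Finset.univ _ (Finset.mem_univ (1 : Equiv.Perm (Fin (m + 2))))]
  have hP1 : (Equiv.Perm.sign (1 : Equiv.Perm (Fin (m + 2))) •
      ∏ i, ψ ((1 : Equiv.Perm (Fin (m + 2))) i) i).order = 1 := by
    rw [aux_order_units_smul, aux_order_prod]
    have : ∀ i : Fin (m + 2), i ∈ Finset.univ → i ≠ 0 →
        (ψ ((1 : Equiv.Perm (Fin (m + 2))) i) i).order = 0 := by
      intro i _ hi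
      simpa using PowerSeries.order_zero_of_unit (hdiag i hi)
    rw [Finset.sum_eq_single_of_mem 0 (Finset.mem_univ _) (fun b _ hb => this b (Finset.mem_univ _) hb)]
    simpa using h11
  have hrest : (2 : ℕ∞) ≤ (∑ σ ∈ Finset.univ.erase (1 : Equiv.Perm (Fin (m + 2))),
      Equiv.Perm.sign σ • ∏ i, ψ (σ i) i).order := by
    apply aux_le_order_sum
    intro σ hσ
    have hσ1 : σ ≠ 1 := (Finset.mem_erase.mp hσ).1
    obtain ⟨i0, hi0⟩ : ∃ i, σ i ≠ i := by
      by_contra hc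
      push_neg at hc
      exact hσ1 (Equiv.ext hc)
    rw [aux_order_units_smul, aux_order_prod]
    calc (2 : ℕ∞) ≤ (ψ (σ i0) i0).order := hoff (σ i0) i0 hi0
      _ ≤ ∑ i, (ψ (σ i) i).order :=
        Finset.single_le_sum (f := fun i => (ψ (σ i) i).order)
          (fun i _ => zero_le) (Finset.mem_univ i0)
  have h12 : (1 : ℕ∞) < 2 := by norm_num
  have hne : (Equiv.Perm.sign (1 : Equiv.Perm (Fin (m + 2))) •
      ∏ i, ψ ((1 : Equiv.Perm (Fin (m + 2))) i) i).order ≠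
      (∑ σ ∈ Finset.univ.erase (1 : Equiv.Perm (Fin (m + 2))),
      Equiv.Perm.sign σ • ∏ i, ψ (σ i) i).order := by
    rw [hP1]
    exact ne_of_lt (lt_of_lt_of_le h12 hrest)
  rw [PowerSeries.order_add_of_order_ne _ _ hne, hP1]
  exact min_eq_left (le_trans h12.le hrest)

/-- Let `R = k[[t]]`, `K = k((t))`, `r = m + 2 ≥ 2`, and let
`ψ ∈ M_r(R)` have `(1,1)` entry of valuation exactly `1`, other diagonal entries units,
and all off-diagonal entries of valuation at least `2`.  Let `h = det ψ`.  Then there is a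
matrix `g` with entries in `R`, `det g = 1` and `ψ = g · diag(h, 1, …, 1)`, and `g` is the
unique such matrix over `K = Frac(R)`: any `g' ∈ M_r(K)` with
`ψ = g' · diag(h, 1, …, 1)` (over `K`) equals the image of `g`. -/
theorem statement9 (k : Type) [Field k] (m : ℕ)
    (ψ : Matrix (Fin (m + 2)) (Fin (m + 2)) (PowerSeries k))
    (h11 : PowerSeries.order (ψ 0 0) = 1)
    (hdiag : ∀ i : Fin (m + 2), i ≠ 0 → IsUnit (ψ i i))
    (hoff : ∀ i j : Fin (m + 2), i ≠ j → 2 ≤ PowerSeries.order (ψ i j)) :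
    PowerSeries.order ψ.det = 1 ∧
    ∃ g : Matrix (Fin (m + 2)) (Fin (m + 2)) (PowerSeries k),
      g.det = 1 ∧
      ψ = g * Matrix.diagonal (fun i => if i = 0 then ψ.det else 1) ∧
      ∀ g' : Matrix (Fin (m + 2)) (Fin (m + 2)) (FractionRing (PowerSeries k)),
        ψ.map (algebraMap (PowerSeries k) (FractionRing (PowerSeries k))) =
          g' * (Matrix.diagonal (fun i => if i = 0 then ψ.det else 1)).map
            (algebraMap (PowerSeries k) (FractionRing (PowerSeries k))) →
        g' = g.map (algebraMap (PowerSeries k) (FractionRing (PowerSeries k))) := by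
  classical
  have hdet : PowerSeries.order ψ.det = 1 := aux_order_det ψ h11 hdiag hoff
  refine ⟨hdet, ?_⟩
  set h : PowerSeries k := ψ.det with hh
  have hne : h ≠ 0 := by
    intro hc
    rw [hc, PowerSeries.order_zero] at hdet
    exact absurd hdet (by simp)
  -- divisibility of the first column
  have hdvd : ∀ i : Fin (m + 2), h ∣ ψ i 0 := by
    intro i
    apply aux_dvd_of_le_order hne
    rw [hdet]
    by_cases hi : i = 0
    · rw [hi, h11]
    · exact le_trans (by norm_num) (hoff i 0 hi)
  choose c hc using hdvd
  set D : Matrix (Fin (m + 2)) (Fin (m + 2)) (PowerSeries k) :=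
    Matrix.diagonal (fun i => if i = 0 then h else 1) with hD
  set g : Matrix (Fin (m + 2)) (Fin (m + 2)) (PowerSeries k) :=
    Matrix.of (fun i j => if j = 0 then c i else ψ i j) with hg
  have hfact : ψ = g * D := by
    apply Matrix.ext
    intro i j
    rw [hD, Matrix.mul_diagonal]
    by_cases hj : j = 0
    · subst hj
      simp only [hg, Matrix.of_apply, if_pos rfl]
      rw [hc i]; exact mul_comm _ _
    · simp only [hg, Matrix.of_apply, if_neg hj, mul_one]
  have hdetD : D.det = h := by
    rw [hD, Matrix.det_diagonal]
    rw [Finset.prod_eq_single_of_mem 0 (Finset.mem_univ _) (fun b _ hb => if_neg hb)]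
    simp
  have hdetg : g.det = 1 := by
    have h1 : g.det * h = 1 * h := by
      rw [one_mul, ← hdetD, ← Matrix.det_mul, ← hfact, hdetD]
    exact mul_right_cancel₀ hne h1
  refine ⟨g, hdetg, hfact, ?_⟩
  intro g' hg'
  set f := algebraMap (PowerSeries k) (FractionRing (PowerSeries k)) with hf
  have hinj : Function.Injective f := IsFractionRing.injective _ _
  have hmap : ψ.map f = g.map f * D.map f := by
    rw [hfact, Matrix.map_mul]
  rw [hmap] at hg'
  have hDunit : IsUnit (D.map f).det := by
    have h2 : (D.map (⇑f)).det = f D.det := (RingHom.map_det f D).symm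
    rw [h2, hdetD]
    exact isUnit_iff_ne_zero.mpr fun hcon => hne ((map_eq_zero_iff f hinj).mp hcon)
  calc g' = g' * (D.map f * (D.map f)⁻¹) := by rw [Matrix.mul_nonsing_inv _ hDunit, Matrix.mul_one]
    _ = (g' * D.map f) * (D.map f)⁻¹ := by rw [Matrix.mul_assoc]
    _ = (g.map f * D.map f) * (D.map f)⁻¹ := by rw [← hg']
    _ = g.map f * (D.map f * (D.map f)⁻¹) := by rw [Matrix.mul_assoc]
    _ = g.map f := by rw [Matrix.mul_nonsing_inv _ hDunit, Matrix.mul_one]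
end

section
/- Let k be a field, n ≥ 1, r ≥ 2, S = k[t]/(t^{n+1}), and let ψ = diag(ut, 1, …, 1) ∈ M_r(S) where u ∈ S is a unit. Suppose g ∈ SL_r(S) satisfies g·ψ = diag(vt, 1, …, 1) for some unit v ∈ S. Then g·ψ = ψ (equivalently, v = u), and moreover g has the form: all entries of columns 2 through r agree with the identity matrix, the (1,1) entry is 1, and for i > 1 the (i,1) entry is of the form a_i t^n with a_i ∈ k. -/
set_option synthInstance.maxHeartbeats 1000000
set_option maxHeartbeats 1000000

/-- The truncated polynomial ring `S = k[t]/(t^{n+1})`. -/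
def TruncPoly (A : Type) [CommRing A] (n : ℕ) : Type :=
  Polynomial A ⧸ Ideal.span {(Polynomial.X : Polynomial A) ^ (n + 1)}

noncomputable instance (A : Type) [CommRing A] (n : ℕ) : CommRing (TruncPoly A n) :=
  inferInstanceAs (CommRing (Polynomial A ⧸ Ideal.span {(Polynomial.X : Polynomial A) ^ (n + 1)}))

noncomputable instance (A : Type) [CommRing A] (n : ℕ) : Algebra A (TruncPoly A n) :=
  inferInstanceAs (Algebra A (Polynomial A ⧸ Ideal.span {(Polynomial.X : Polynomial A) ^ (n + 1)}))

/-- The image of `t` in `A[t]/(t^{n+1})`. -/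
noncomputable def tTrunc (A : Type) [CommRing A] (n : ℕ) : TruncPoly A n :=
  Ideal.Quotient.mk _ (Polynomial.X : Polynomial A)

/-- Anything annihilating `t` in `k[t]/(t^{n+1})` is of the form `a * t^n` with `a ∈ k`. -/
lemma ann_t (k : Type) [Field k] (n : ℕ) (x : TruncPoly k n) (hx : x * tTrunc k n = 0) :
    ∃ a : k, x = algebraMap k (TruncPoly k n) a * tTrunc k n ^ n := by
  obtain ⟨p, rfl⟩ := Ideal.Quotient.mk_surjective x
  have hmem : (p * Polynomial.X : Polynomial k) ∈
      Ideal.span {(Polynomial.X : Polynomial k) ^ (n + 1)} := by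
    rw [← Ideal.Quotient.eq_zero_iff_mem]
    rw [map_mul]; exact hx
  rw [Ideal.mem_span_singleton] at hmem
  have hdvd : (Polynomial.X : Polynomial k) ^ n ∣ p := by
    have h2 : (Polynomial.X : Polynomial k) ^ n * Polynomial.X ∣ p * Polynomial.X := by
      rw [← pow_succ]; exact hmem
    exact (mul_dvd_mul_iff_right (Polynomial.X_ne_zero)).mp h2
  obtain ⟨q, hq⟩ := hdvd
  refine ⟨q.coeff 0, ?_⟩
  have hXdvd : (Polynomial.X : Polynomial k) ∣ (q - Polynomial.C (q.coeff 0)) := by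
    rw [Polynomial.X_dvd_iff]; simp
  obtain ⟨r, hr⟩ := hXdvd
  have key : Ideal.Quotient.mk (Ideal.span {(Polynomial.X : Polynomial k) ^ (n + 1)}) p =
      Ideal.Quotient.mk _ (Polynomial.C (q.coeff 0) * Polynomial.X ^ n) := by
    rw [Ideal.Quotient.eq, Ideal.mem_span_singleton]
    refine ⟨r, ?_⟩
    rw [hq]
    linear_combination (Polynomial.X : Polynomial k) ^ n * hr
  rw [key, map_mul, map_pow]
  rfl

/-- Let `k` be a field, `n ≥ 1`, `r = m + 2 ≥ 2`, `S = k[t]/(t^{n+1})`,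
and `ψ = diag(ut, 1, …, 1)` with `u ∈ S` a unit.  If `g ∈ SL_r(S)` satisfies
`g·ψ = diag(vt, 1, …, 1)` for a unit `v ∈ S`, then `g·ψ = ψ`, all entries of columns `2`
through `r` of `g` agree with the identity matrix, the `(1,1)` entry of `g` is `1`, and
for `i > 1` the `(i,1)` entry of `g` is of the form `a_i t^n` with `a_i ∈ k`. -/
theorem statement11 (k : Type) [Field k] (n m : ℕ) (hn : 1 ≤ n)
    (u v : TruncPoly k n) (hu : IsUnit u) (hv : IsUnit v)
    (g : Matrix (Fin (m + 2)) (Fin (m + 2)) (TruncPoly k n))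
    (hg : g.det = 1)
    (hgψ : g * Matrix.diagonal (fun i => if i = 0 then u * tTrunc k n else 1) =
      Matrix.diagonal (fun i => if i = 0 then v * tTrunc k n else 1)) :
    g * Matrix.diagonal (fun i => if i = 0 then u * tTrunc k n else 1) =
      Matrix.diagonal (fun i => if i = 0 then u * tTrunc k n else 1) ∧
    g 0 0 = 1 ∧
    (∀ i j : Fin (m + 2), j ≠ 0 → g i j = if i = j then 1 else 0) ∧
    (∀ i' : Fin (m + 1), ∃ a : k,
      g i'.succ 0 = algebraMap k (TruncPoly k n) a * (tTrunc k n) ^ n) := by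
  have hent : ∀ i j : Fin (m + 2),
      g i j * (if j = 0 then u * tTrunc k n else 1) =
        if i = j then (if i = 0 then v * tTrunc k n else 1) else 0 := by
    intro i j
    have h := congrFun (congrFun hgψ i) j
    rw [Matrix.mul_diagonal, Matrix.diagonal_apply] at h
    exact h
  have hcol : ∀ i j : Fin (m + 2), j ≠ 0 → g i j = if i = j then 1 else 0 := by
    intro i j hj
    have h := hent i j
    rw [if_neg hj, mul_one] at h
    rcases eq_or_ne i j with rfl | hij
    · simpa [hj] using h
    · simpa [hij] using h
  have hdet : g.det = g 0 0 := by
    rw [Matrix.det_succ_column_zero]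
    rw [Fintype.sum_eq_single (0 : Fin (m + 2))]
    · have hsub : g.submatrix (Fin.succAbove 0) Fin.succ = 1 := by
        ext i j
        rw [Matrix.submatrix_apply, Fin.succAbove_zero,
          hcol _ _ (Fin.succ_ne_zero j), Matrix.one_apply]
        simp [Fin.succ_inj]
      rw [hsub, Matrix.det_one]
      simp
    · intro i hi
      have hz : (g.submatrix (Fin.succAbove i) Fin.succ).det = 0 := by
        apply Matrix.det_eq_zero_of_row_eq_zero 0
        intro j
        have h0 : i.succAbove 0 = 0 := by
          apply Fin.succAbove_of_castSucc_lt
          simpa using Fin.pos_of_ne_zero hi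
        rw [Matrix.submatrix_apply, h0, hcol _ _ (Fin.succ_ne_zero j),
          if_neg (Ne.symm (Fin.succ_ne_zero j))]
      rw [hz, mul_zero]
  have hg00 : g 0 0 = 1 := hdet.symm.trans hg
  have h00 := hent 0 0
  simp only [if_pos rfl, if_true, hg00, one_mul] at h00
  have hann : ∀ i' : Fin (m + 1), g i'.succ 0 * tTrunc k n = 0 := by
    intro i'
    have h := hent i'.succ 0
    rw [if_pos rfl, if_neg (Fin.succ_ne_zero i')] at h
    obtain ⟨w, hw⟩ := hu.exists_right_inv
    linear_combination w * h - g i'.succ 0 * tTrunc k n * hw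
  refine ⟨?_, hg00, hcol, fun i' => ann_t k n _ (hann i')⟩
  rw [hgψ]
  refine congrArg Matrix.diagonal (funext fun i => ?_)
  by_cases h : i = 0
  · simp [h, ← h00]
  · simp [h]
end
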